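/- Let F be the graph on vertices {1,...,6} consisting of the 6-cycle 1-2-3-4-5-6-1 together with the chords {1,4}, {2,5}, {3,6}, {2,4} (so ω(F) = 3, F has 6 vertices and 10 edges). Let G be a graph with |V(G)| = 2n (n ≥ 1) and m edges, let t be an integer with C(t,2) ≥ 9n² + n + m, and let H₀ be any graph with t vertices and C(t,2) − (9n² + n + m) edges. Then the graph H := ((G ⋈ F⁽ⁿ⁾) ⋈ K_t) ⊕ H₀ satisfies: |V(H)| = 8n + 2t, |E(H)| = (1/4)·|V(H)|·(|V(H)| − 2), and ω(H) = ω(G) + 3n + t; consequently ω(H) ≥ |V(H)|/2 if and only if ω(G) ≥ n. -/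

import Mathlib

open Finset

/-- The disjoint union `G ⊕ H` of two graphs. -/
def gDisjUnion {α β : Type*} (G : SimpleGraph α) (H : SimpleGraph β) :
    SimpleGraph (α ⊕ β) where
  Adj x y := match x, y with
    | .inl a, .inl b => G.Adj a b
    | .inr a, .inr b => H.Adj a b
    | _, _ => False
  symm := by
    constructor
    rintro (a|a) (b|b) h
    · exact G.adj_symm h
    · exact h
    · exact h
    · exact H.adj_symm h
  loopless := by
    constructor
    rintro (a|a) h
    · exact G.loopless.irrefl a h
    · exact H.loopless.irrefl a h

/-- The join `G ⋈ H` of two graphs: disjoint union plus all edges across. -/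
def gJoin {α β : Type*} (G : SimpleGraph α) (H : SimpleGraph β) :
    SimpleGraph (α ⊕ β) where
  Adj x y := match x, y with
    | .inl a, .inl b => G.Adj a b
    | .inr a, .inr b => H.Adj a b
    | _, _ => True
  symm := by
    constructor
    rintro (a|a) (b|b) h
    · exact G.adj_symm h
    · exact trivial
    · exact trivial
    · exact H.adj_symm h
  loopless := by
    constructor
    rintro (a|a) h
    · exact G.loopless.irrefl a h
    · exact H.loopless.irrefl a h

/-- The `k`-th expansion `G⁽ᵏ⁾` of `G`: each vertex `v` is replaced by a clique `X_v`
of size `k`, with a complete bipartite graph between `X_u` and `X_v` whenever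
`{u,v}` is an edge of `G`. -/
def expansion {α : Type*} (G : SimpleGraph α) (k : ℕ) : SimpleGraph (α × Fin k) where
  Adj x y := x ≠ y ∧ (x.1 = y.1 ∨ G.Adj x.1 y.1)
  symm := ⟨fun x y h => ⟨h.1.symm, h.2.imp Eq.symm (fun ha => G.adj_symm ha)⟩⟩
  loopless := ⟨fun x h => h.1 rfl⟩

/-- The clique number `ω(G)`. -/
noncomputable def omega {α : Type*} (G : SimpleGraph α) : ℕ :=
  sSup {k : ℕ | ∃ s : Finset α, G.IsNClique k s}

/-- The graph `F` on 6 vertices: the 6-cycle `0-1-2-3-4-5-0` together with the chords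
`{0,3}, {1,4}, {2,5}, {1,3}` (with vertices `1,…,6` renamed as `0,…,5`). -/
def Fgraph : SimpleGraph (Fin 6) :=
  SimpleGraph.fromRel (fun i j =>
    (i, j) ∈ [((0 : Fin 6), (1 : Fin 6)), (1, 2), (2, 3), (3, 4), (4, 5), (5, 0),
      (0, 3), (1, 4), (2, 5), (1, 3)])

section Aux

open SimpleGraph

variable {α β : Type*}

/-! ### omega API -/

lemma zero_mem_cliqueSet (G : SimpleGraph α) :
    0 ∈ {k : ℕ | ∃ s : Finset α, G.IsNClique k s} := ⟨∅, by simp⟩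

lemma omega_bddAbove [Fintype α] (G : SimpleGraph α) :
    BddAbove {k : ℕ | ∃ s : Finset α, G.IsNClique k s} := by
  refine ⟨Fintype.card α, ?_⟩
  rintro k ⟨s, hs⟩
  rw [← hs.2]
  exact s.card_le_univ

lemma le_omega [Fintype α] {G : SimpleGraph α} {k : ℕ} {s : Finset α}
    (h : G.IsNClique k s) : k ≤ omega G :=
  le_csSup (omega_bddAbove G) ⟨s, h⟩

lemma omega_le [Fintype α] {G : SimpleGraph α} {c : ℕ}
    (h : ∀ (k : ℕ) (s : Finset α), G.IsNClique k s → k ≤ c) : omega G ≤ c :=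
  csSup_le ⟨0, zero_mem_cliqueSet G⟩ (by rintro k ⟨s, hs⟩; exact h k s hs)

lemma exists_omega_clique [Fintype α] (G : SimpleGraph α) :
    ∃ s : Finset α, G.IsNClique (omega G) s :=
  Nat.sSup_mem ⟨0, zero_mem_cliqueSet G⟩ (omega_bddAbove G)

lemma omega_le_card [Fintype α] (G : SimpleGraph α) : omega G ≤ Fintype.card α :=
  omega_le fun k s h => by rw [← h.2]; exact s.card_le_univ

/-! ### cliques in join / disjoint union -/

lemma isClique_toLeft_of_gJoin {G : SimpleGraph α} {H : SimpleGraph β}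
    {s : Finset (α ⊕ β)} (h : (gJoin G H).IsClique s) : G.IsClique s.toLeft := by
  intro a ha b hb hab
  exact h (by simpa using ha) (by simpa using hb) (by simpa using hab)

lemma isClique_toRight_of_gJoin {G : SimpleGraph α} {H : SimpleGraph β}
    {s : Finset (α ⊕ β)} (h : (gJoin G H).IsClique s) : H.IsClique s.toRight := by
  intro a ha b hb hab
  exact h (by simpa using ha) (by simpa using hb) (by simpa using hab)

lemma isClique_toLeft_of_gDisjUnion {G : SimpleGraph α} {H : SimpleGraph β}
    {s : Finset (α ⊕ β)} (h : (gDisjUnion G H).IsClique s) : G.IsClique s.toLeft := by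
  intro a ha b hb hab
  exact h (by simpa using ha) (by simpa using hb) (by simpa using hab)

lemma isClique_toRight_of_gDisjUnion {G : SimpleGraph α} {H : SimpleGraph β}
    {s : Finset (α ⊕ β)} (h : (gDisjUnion G H).IsClique s) : H.IsClique s.toRight := by
  intro a ha b hb hab
  exact h (by simpa using ha) (by simpa using hb) (by simpa using hab)

lemma isClique_disjSum_gJoin {G : SimpleGraph α} {H : SimpleGraph β}
    {s₁ : Finset α} {s₂ : Finset β} (h₁ : G.IsClique s₁) (h₂ : H.IsClique s₂) :
    (gJoin G H).IsClique (s₁.disjSum s₂) := by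
  rintro (a|b) hx (c|d) hy hne
  · exact h₁ (by simpa using hx) (by simpa using hy) (by simpa using hne)
  · trivial
  · trivial
  · exact h₂ (by simpa using hx) (by simpa using hy) (by simpa using hne)

lemma omega_gJoin [Fintype α] [Fintype β] (G : SimpleGraph α) (H : SimpleGraph β) :
    omega (gJoin G H) = omega G + omega H := by
  apply le_antisymm
  · apply omega_le
    intro k s hs
    have h1 := le_omega (G := G) ⟨isClique_toLeft_of_gJoin hs.1, rfl⟩
    have h2 := le_omega (G := H) ⟨isClique_toRight_of_gJoin hs.1, rfl⟩
    have h3 := s.card_toLeft_add_card_toRight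
    have h4 := hs.2
    omega
  · obtain ⟨s₁, h₁⟩ := exists_omega_clique G
    obtain ⟨s₂, h₂⟩ := exists_omega_clique H
    refine le_omega (s := s₁.disjSum s₂) ⟨isClique_disjSum_gJoin h₁.1 h₂.1, ?_⟩
    rw [Finset.card_disjSum, h₁.2, h₂.2]

lemma omega_gDisjUnion_le [Fintype α] [Fintype β] (G : SimpleGraph α) (H : SimpleGraph β) :
    omega (gDisjUnion G H) ≤ max (omega G) (omega H) := by
  apply omega_le
  intro k s hs
  rcases s.toRight.eq_empty_or_nonempty with h | h
  · refine le_trans ?_ (le_max_left _ _)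
    have h1 := le_omega (G := G) ⟨isClique_toLeft_of_gDisjUnion hs.1, rfl⟩
    have h3 := s.card_toLeft_add_card_toRight
    have h4 := hs.2
    have h5 : s.toRight.card = 0 := by rw [h]; rfl
    omega
  · rcases s.toLeft.eq_empty_or_nonempty with h' | h'
    · refine le_trans ?_ (le_max_right _ _)
      have h1 := le_omega (G := H) ⟨isClique_toRight_of_gDisjUnion hs.1, rfl⟩
      have h3 := s.card_toLeft_add_card_toRight
      have h4 := hs.2
      have h5 : s.toLeft.card = 0 := by rw [h']; rfl
      omega
    · obtain ⟨b, hb⟩ := h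
      obtain ⟨a, ha⟩ := h'
      exact False.elim (hs.1 (x := Sum.inl a) (by simpa using ha)
        (y := Sum.inr b) (by simpa using hb) (by simp))

lemma le_omega_gDisjUnion_left [Fintype α] [Fintype β] (G : SimpleGraph α) (H : SimpleGraph β) :
    omega G ≤ omega (gDisjUnion G H) := by
  obtain ⟨s, hs⟩ := exists_omega_clique G
  refine le_omega (s := s.disjSum ∅) ⟨?_, by simp [hs.2]⟩
  rintro (a|b) hx (c|d) hy hne
  · exact hs.1 (by simpa using hx) (by simpa using hy) (by simpa using hne)
  · simp at hy
  · simp at hx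
  · simp at hx

end Aux
section Aux2

open SimpleGraph

variable {α β : Type*}

lemma omega_expansion [Fintype α] (G : SimpleGraph α) (k : ℕ) :
    omega (expansion G k) = omega G * k := by
  classical
  apply le_antisymm
  · apply omega_le
    intro c s hs
    have himg : G.IsClique (s.image Prod.fst) := by
      intro a ha b hb hab
      simp only [Finset.coe_image, Set.mem_image, Finset.mem_coe] at ha hb
      obtain ⟨x, hx, rfl⟩ := ha
      obtain ⟨y, hy, rfl⟩ := hb
      have := hs.1 (Finset.mem_coe.mpr hx) (Finset.mem_coe.mpr hy)
        (fun h => hab (congrArg Prod.fst h))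
      rcases this.2 with h | h
      · exact absurd h hab
      · exact h
    have hsub : s ⊆ (s.image Prod.fst) ×ˢ Finset.univ := by
      intro x hx
      simp only [Finset.mem_product, Finset.mem_univ, and_true]
      exact Finset.mem_image_of_mem _ hx
    have hle : c ≤ (s.image Prod.fst).card * k := by
      rw [← hs.2]
      calc s.card ≤ ((s.image Prod.fst) ×ˢ Finset.univ).card := Finset.card_le_card hsub
        _ = (s.image Prod.fst).card * k := by
            rw [Finset.card_product, Finset.card_univ, Fintype.card_fin]
    exact hle.trans (Nat.mul_le_mul_right k (le_omega ⟨himg, rfl⟩))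
  · obtain ⟨s, hs⟩ := exists_omega_clique G
    refine le_omega (s := s ×ˢ Finset.univ) ⟨?_, ?_⟩
    · rintro ⟨a, i⟩ hx ⟨b, j⟩ hy hne
      refine ⟨hne, ?_⟩
      by_cases hab : a = b
      · exact Or.inl hab
      · refine Or.inr (hs.1 ?_ ?_ hab)
        · simp only [Finset.coe_product, Set.mem_prod, Finset.mem_coe] at hx
          exact Finset.mem_coe.mpr hx.1
        · simp only [Finset.coe_product, Set.mem_prod, Finset.mem_coe] at hy
          exact Finset.mem_coe.mpr hy.1
    · rw [Finset.card_product, Finset.card_univ, Fintype.card_fin, hs.2]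

lemma omega_top (t : ℕ) : omega (⊤ : SimpleGraph (Fin t)) = t := by
  apply le_antisymm
  · have := omega_le_card (⊤ : SimpleGraph (Fin t))
    rwa [Fintype.card_fin] at this
  · refine le_omega (s := Finset.univ) ⟨?_, by simp⟩
    intro x _ y _ hne
    exact hne

instance : DecidableRel Fgraph.Adj := fun v w =>
  decidable_of_iff' _ (SimpleGraph.fromRel_adj _ v w)

lemma omega_Fgraph : omega Fgraph = 3 := by
  apply le_antisymm
  · apply omega_le
    intro k s hs
    rw [← hs.2]
    have key : ∀ s : Finset (Fin 6), Fgraph.IsClique ↑s → s.card ≤ 3 := by decide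
    exact key s hs.1
  · refine le_omega (s := {1, 2, 3}) ⟨?_, by decide⟩
    have : Fgraph.IsClique ↑({1, 2, 3} : Finset (Fin 6)) := by decide
    exact this

end Aux2
section Aux3

open SimpleGraph

variable {α β : Type*}

lemma handshake [Fintype α] (G : SimpleGraph α) :
    2 * Nat.card G.edgeSet = ∑ v, Nat.card (G.neighborSet v) := by
  classical
  calc 2 * Nat.card G.edgeSet = 2 * #G.edgeFinset := by
        rw [SimpleGraph.edgeFinset_card, Nat.card_eq_fintype_card]
    _ = ∑ v, G.degree v := (SimpleGraph.sum_degrees_eq_twice_card_edges G).symm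
    _ = ∑ v, Nat.card (G.neighborSet v) := Finset.sum_congr rfl fun v _ => by
        rw [← SimpleGraph.card_neighborSet_eq_degree, Nat.card_eq_fintype_card]

lemma ncard_nbr_gJoin_inl [Fintype α] [Fintype β] (G : SimpleGraph α) (H : SimpleGraph β)
    (a : α) : Nat.card ((gJoin G H).neighborSet (Sum.inl a)) =
      Nat.card (G.neighborSet a) + Fintype.card β := by
  have e1 : Nat.card {x : α // Sum.inl x ∈ (gJoin G H).neighborSet (Sum.inl a)} =
      Nat.card (G.neighborSet a) := rfl
  have e2 : Nat.card {b : β // Sum.inr b ∈ (gJoin G H).neighborSet (Sum.inl a)} =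
      Fintype.card β :=
    (Nat.card_congr (Equiv.subtypeUnivEquiv fun b => trivial)).trans Nat.card_eq_fintype_card
  rw [Nat.card_congr (Equiv.subtypeSum (p := (· ∈ (gJoin G H).neighborSet (Sum.inl a)))),
    Nat.card_sum, e1, e2]

lemma ncard_nbr_gJoin_inr [Fintype α] [Fintype β] (G : SimpleGraph α) (H : SimpleGraph β)
    (b : β) : Nat.card ((gJoin G H).neighborSet (Sum.inr b)) =
      Fintype.card α + Nat.card (H.neighborSet b) := by
  have e1 : Nat.card {a : α // Sum.inl a ∈ (gJoin G H).neighborSet (Sum.inr b)} =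
      Fintype.card α :=
    (Nat.card_congr (Equiv.subtypeUnivEquiv fun a => trivial)).trans Nat.card_eq_fintype_card
  have e2 : Nat.card {y : β // Sum.inr y ∈ (gJoin G H).neighborSet (Sum.inr b)} =
      Nat.card (H.neighborSet b) := rfl
  rw [Nat.card_congr (Equiv.subtypeSum (p := (· ∈ (gJoin G H).neighborSet (Sum.inr b)))),
    Nat.card_sum, e1, e2]

lemma ncard_nbr_gDisjUnion_inl [Fintype α] [Fintype β] (G : SimpleGraph α) (H : SimpleGraph β)
    (a : α) : Nat.card ((gDisjUnion G H).neighborSet (Sum.inl a)) =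
      Nat.card (G.neighborSet a) := by
  have e1 : Nat.card {x : α // Sum.inl x ∈ (gDisjUnion G H).neighborSet (Sum.inl a)} =
      Nat.card (G.neighborSet a) := rfl
  have e2 : Nat.card {b : β // Sum.inr b ∈ (gDisjUnion G H).neighborSet (Sum.inl a)} = 0 := by
    haveI : IsEmpty {b : β // Sum.inr b ∈ (gDisjUnion G H).neighborSet (Sum.inl a)} :=
      ⟨fun x => x.2⟩
    exact Nat.card_of_isEmpty
  rw [Nat.card_congr (Equiv.subtypeSum (p := (· ∈ (gDisjUnion G H).neighborSet (Sum.inl a)))),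
    Nat.card_sum, e1, e2, add_zero]

lemma ncard_nbr_gDisjUnion_inr [Fintype α] [Fintype β] (G : SimpleGraph α) (H : SimpleGraph β)
    (b : β) : Nat.card ((gDisjUnion G H).neighborSet (Sum.inr b)) =
      Nat.card (H.neighborSet b) := by
  have e1 : Nat.card {a : α // Sum.inl a ∈ (gDisjUnion G H).neighborSet (Sum.inr b)} = 0 := by
    haveI : IsEmpty {a : α // Sum.inl a ∈ (gDisjUnion G H).neighborSet (Sum.inr b)} :=
      ⟨fun x => x.2⟩
    exact Nat.card_of_isEmpty
  have e2 : Nat.card {y : β // Sum.inr y ∈ (gDisjUnion G H).neighborSet (Sum.inr b)} =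
      Nat.card (H.neighborSet b) := rfl
  rw [Nat.card_congr (Equiv.subtypeSum (p := (· ∈ (gDisjUnion G H).neighborSet (Sum.inr b)))),
    Nat.card_sum, e1, e2, zero_add]

lemma two_card_edge_gJoin [Fintype α] [Fintype β] (G : SimpleGraph α) (H : SimpleGraph β) :
    2 * Nat.card (gJoin G H).edgeSet =
      2 * Nat.card G.edgeSet + 2 * Nat.card H.edgeSet
        + 2 * (Fintype.card α * Fintype.card β) := by
  rw [handshake, Fintype.sum_sum_type]
  simp only [ncard_nbr_gJoin_inl, ncard_nbr_gJoin_inr]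
  rw [Finset.sum_add_distrib, Finset.sum_add_distrib, Finset.sum_const, Finset.sum_const,
    ← handshake, ← handshake, Finset.card_univ, Finset.card_univ, smul_eq_mul, smul_eq_mul]
  ring

lemma two_card_edge_gDisjUnion [Fintype α] [Fintype β] (G : SimpleGraph α) (H : SimpleGraph β) :
    2 * Nat.card (gDisjUnion G H).edgeSet =
      2 * Nat.card G.edgeSet + 2 * Nat.card H.edgeSet := by
  rw [handshake, Fintype.sum_sum_type]
  simp only [ncard_nbr_gDisjUnion_inl, ncard_nbr_gDisjUnion_inr]
  rw [← handshake, ← handshake]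

lemma ncard_nbr_expansion [Fintype α] (G : SimpleGraph α) (k : ℕ) (v : α) (i : Fin k) :
    Nat.card ((expansion G k).neighborSet (v, i)) =
      (k - 1) + Nat.card (G.neighborSet v) * k := by
  classical
  have hset : (expansion G k).neighborSet (v, i) =
      (({v} : Set α) ×ˢ ({i}ᶜ : Set (Fin k))) ∪
        ((G.neighborSet v) ×ˢ (Set.univ : Set (Fin k))) := by
    ext ⟨w, j⟩
    simp only [SimpleGraph.mem_neighborSet, Set.mem_union, Set.mem_prod, Set.mem_singleton_iff,
      Set.mem_compl_iff, Set.mem_univ, and_true]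
    constructor
    · rintro ⟨hne, hvw | hadj⟩
      · subst hvw
        exact Or.inl ⟨rfl, fun h => hne (by rw [h])⟩
      · exact Or.inr hadj
    · rintro (⟨rfl, hj⟩ | hadj)
      · exact ⟨fun h => hj (congrArg Prod.snd h).symm, Or.inl rfl⟩
      · refine ⟨fun h => G.loopless.irrefl v ?_, Or.inr hadj⟩
        have hwv : w = v := (congrArg Prod.fst h).symm
        rwa [hwv] at hadj
  have hdisj : Disjoint (({v} : Set α) ×ˢ ({i}ᶜ : Set (Fin k)))
      ((G.neighborSet v) ×ˢ (Set.univ : Set (Fin k))) := by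
    rw [Set.disjoint_left]
    rintro ⟨w, j⟩ ⟨hw, _⟩ ⟨hw', _⟩
    rw [Set.mem_singleton_iff] at hw
    exact G.loopless.irrefl v (hw ▸ hw')
  have c1 : Nat.card (({v} : Set α) ×ˢ ({i}ᶜ : Set (Fin k)) : Set (α × Fin k)) = k - 1 := by
    rw [Nat.card_congr (Equiv.Set.prod _ _), Nat.card_prod,
      Nat.card_eq_fintype_card, Nat.card_eq_fintype_card, Set.card_singleton, one_mul,
      Fintype.card_compl_set, Set.card_singleton, Fintype.card_fin]
  have c2 : Nat.card ((G.neighborSet v) ×ˢ (Set.univ : Set (Fin k)) : Set (α × Fin k)) =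
      Nat.card (G.neighborSet v) * k := by
    rw [Nat.card_congr (Equiv.Set.prod _ _), Nat.card_prod]
    congr 1
    exact ((Nat.card_congr (Equiv.Set.univ _)).trans Nat.card_eq_fintype_card).trans
      (Fintype.card_fin k)
  rw [hset, Nat.card_coe_set_eq,
    Set.ncard_union_eq hdisj (Set.toFinite _) (Set.toFinite _),
    ← Nat.card_coe_set_eq, ← Nat.card_coe_set_eq, c1, c2]

lemma two_card_edge_expansion [Fintype α] (G : SimpleGraph α) (k : ℕ) :
    2 * Nat.card (expansion G k).edgeSet =
      Fintype.card α * (k * (k - 1)) + k * k * (2 * Nat.card G.edgeSet) := by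
  rw [handshake, Fintype.sum_prod_type]
  simp only [ncard_nbr_expansion]
  rw [handshake]
  simp only [Finset.sum_add_distrib, Finset.sum_const, Finset.card_univ, Fintype.card_fin,
    smul_eq_mul, ← Finset.mul_sum, ← Finset.sum_mul]
  ring

lemma card_edge_top (t : ℕ) : Nat.card (⊤ : SimpleGraph (Fin t)).edgeSet = t.choose 2 := by
  classical
  rw [Nat.card_eq_fintype_card, ← SimpleGraph.edgeFinset_card,
    SimpleGraph.card_edgeFinset_top_eq_card_choose_two, Fintype.card_fin]

lemma card_edge_Fgraph : Nat.card Fgraph.edgeSet = 10 := by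
  rw [Nat.card_eq_fintype_card, ← SimpleGraph.edgeFinset_card]
  decide

lemma two_mul_choose_two (t : ℕ) : 2 * t.choose 2 + t = t * t := by
  induction t with
  | zero => rfl
  | succ s ih =>
    have key : (s + 1).choose 2 = s + s.choose 2 := by
      rw [Nat.choose_succ_succ, Nat.choose_one_right]
    rw [key, show (s + 1) * (s + 1) = s * s + 2 * s + 1 from by ring]
    omega

end Aux3
set_option maxHeartbeats 1000000 in
theorem stmt3 {α β : Type*} [Fintype α] [Fintype β]
    (n : ℕ) (hn : 1 ≤ n) (G : SimpleGraph α) (hcard : Fintype.card α = 2 * n)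
    (m : ℕ) (hm : Nat.card G.edgeSet = m)
    (t : ℕ) (ht : 9 * n ^ 2 + n + m ≤ t.choose 2)
    (H₀ : SimpleGraph β) (hβ : Fintype.card β = t)
    (hE₀ : Nat.card H₀.edgeSet = t.choose 2 - (9 * n ^ 2 + n + m)) :
    let H := gDisjUnion (gJoin (gJoin G (expansion Fgraph n)) (⊤ : SimpleGraph (Fin t))) H₀
    Fintype.card (((α ⊕ Fin 6 × Fin n) ⊕ Fin t) ⊕ β) = 8 * n + 2 * t ∧
    4 * Nat.card H.edgeSet =
      Fintype.card (((α ⊕ Fin 6 × Fin n) ⊕ Fin t) ⊕ β) *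
        (Fintype.card (((α ⊕ Fin 6 × Fin n) ⊕ Fin t) ⊕ β) - 2) ∧
    omega H = omega G + 3 * n + t ∧
    (4 * n + t ≤ omega H ↔ n ≤ omega G) := by
  intro H
  have hV : Fintype.card (((α ⊕ Fin 6 × Fin n) ⊕ Fin t) ⊕ β) = 8 * n + 2 * t := by
    simp only [Fintype.card_sum, Fintype.card_prod, Fintype.card_fin, hcard, hβ]
    ring
  -- clique number
  have hωF : omega (expansion Fgraph n) = 3 * n := by
    rw [omega_expansion, omega_Fgraph]
  have hωA : omega (gJoin (gJoin G (expansion Fgraph n)) (⊤ : SimpleGraph (Fin t))) =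
      omega G + 3 * n + t := by
    rw [omega_gJoin, omega_gJoin, hωF, omega_top]
  have h0 : omega H₀ ≤ t := by
    have := omega_le_card H₀; rwa [hβ] at this
  have h3 : omega (gDisjUnion (gJoin (gJoin G (expansion Fgraph n))
      (⊤ : SimpleGraph (Fin t))) H₀) = omega G + 3 * n + t := by
    apply le_antisymm
    · refine (omega_gDisjUnion_le _ _).trans ?_
      rw [hωA]
      exact max_le le_rfl (by omega)
    · rw [← hωA]
      exact le_omega_gDisjUnion_left _ _
  -- edge count
  have h2 : 4 * Nat.card (gDisjUnion (gJoin (gJoin G (expansion Fgraph n))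
      (⊤ : SimpleGraph (Fin t))) H₀).edgeSet = (8 * n + 2 * t) * (8 * n + 2 * t - 2) := by
    have e0 : Nat.card H₀.edgeSet + (9 * n ^ 2 + n + m) = t.choose 2 := by
      rw [hE₀]; exact Nat.sub_add_cancel ht
    have e4 := two_card_edge_expansion Fgraph n
    rw [Fintype.card_fin, card_edge_Fgraph] at e4
    have e3 := two_card_edge_gJoin G (expansion Fgraph n)
    rw [Fintype.card_prod, Fintype.card_fin, Fintype.card_fin, hcard] at e3
    have e2 := two_card_edge_gJoin (gJoin G (expansion Fgraph n)) (⊤ : SimpleGraph (Fin t))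
    rw [Fintype.card_sum, Fintype.card_prod, Fintype.card_fin, Fintype.card_fin,
      Fintype.card_fin, hcard] at e2
    have e1 := two_card_edge_gDisjUnion (gJoin (gJoin G (expansion Fgraph n))
      (⊤ : SimpleGraph (Fin t))) H₀
    have etop := card_edge_top t
    have hc2t := two_mul_choose_two t
    obtain ⟨u, rfl⟩ : ∃ u, n = u + 1 := ⟨n - 1, by omega⟩
    rw [Nat.add_sub_cancel] at e4
    rw [show 8 * (u + 1) + 2 * t - 2 = 8 * u + 6 + 2 * t from by omega]
    linarith [e0, e1, e2, e3, e4, etop, hc2t, hm]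
  have h4 : (4 * n + t ≤ omega (gDisjUnion (gJoin (gJoin G (expansion Fgraph n))
      (⊤ : SimpleGraph (Fin t))) H₀) ↔ n ≤ omega G) := by
    rw [h3]; omega
  rw [hV]
  exact ⟨rfl, h2, h3, h4⟩
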